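/- arXiv:math/0609456 — 2 statements merged into one kernel-verified Lean document; each statement's English description precedes it below -/
import Mathlib

section
/- Let Λ = ℂ[ℤ^m] with m ≥ 1, and let A be a Λ-module which is finite-dimensional over ℂ. Then for each j ≥ 0, the set A_j = { ρ ∈ Hom(ℤ^m, ℂ*) : Tor_j^Λ(ℂ_ρ, A) = 0 } is a nonempty Zariski open subset of the character torus (ℂ*)^m. -/
open CategoryTheory

/-- The complex group algebra of `G`. -/
abbrev GA (G : Type) [Group G] : Type := MonoidAlgebra ℂ G

/-- The ring homomorphism `ℂ[G] → ℂ` induced by a character `ρ : G → ℂ*`. -/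
noncomputable def evalChar (G : Type) [Group G] (ρ : G →* ℂˣ) : GA G →+* ℂ :=
  ((MonoidAlgebra.lift (R := ℂ) (M := G) (A := ℂ)) ((Units.coeHom ℂ).comp ρ)).toRingHom

/-- `ℂ` as a `ℂ[G]`-module via the character `ρ` (the rank one local system `ℂ_ρ`). -/
noncomputable def CRho (G : Type) [Group G] (ρ : G →* ℂˣ) : ModuleCat (GA G) :=
  @ModuleCat.of (GA G) _ ℂ _ (Module.compHom ℂ (evalChar G ρ))

/-- The augmentation submodule of a `ℂ[G]`-module `M`, generated by all `g•m - m`. -/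
noncomputable def augSub (G : Type) [Group G] (M : ModuleCat (GA G)) : Submodule (GA G) M :=
  Submodule.span (GA G) {x | ∃ (g : G) (m : M), x = (MonoidAlgebra.of ℂ G g) • m - m}

/-- The coinvariants functor `M ↦ M_G` on `ℂ[G]`-modules. -/
noncomputable def coinvFunctor (G : Type) [Group G] :
    ModuleCat (GA G) ⥤ ModuleCat (GA G) where
  obj M := ModuleCat.of _ (M ⧸ augSub G M)
  map {M N} f := ModuleCat.ofHom (Submodule.mapQ (augSub G M) (augSub G N) f.hom (by
    rw [augSub, Submodule.span_le]
    rintro x ⟨g, m, rfl⟩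
    exact Submodule.subset_span ⟨g, f m, by simp⟩))
  map_id M := by
    apply ModuleCat.hom_ext
    apply Submodule.linearMap_qext
    rfl
  map_comp f g := by
    apply ModuleCat.hom_ext
    apply Submodule.linearMap_qext
    rfl

instance (G : Type) [Group G] : (coinvFunctor G).Additive where
  map_add := by
    intros
    apply ModuleCat.hom_ext
    apply Submodule.linearMap_qext
    rfl

/-- Group homology `H_n(G, ℂ_ρ)` with coefficients in the rank one local system `ℂ_ρ`,
defined as the `n`-th left derived functor of the coinvariants functor.  For `ρ = 1`
this is group homology with (trivial) complex coefficients `H_n(G, ℂ)`. -/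
noncomputable def grpHomology (G : Type) [Group G] (n : ℕ) (ρ : G →* ℂˣ) :
    ModuleCat (GA G) :=
  (((coinvFunctor G).leftDerived n).obj (CRho G ρ))

/-- The free abelian group `ℤ^m`, written multiplicatively. -/
abbrev Zm (m : ℕ) : Type := Multiplicative (Fin m → ℤ)

/-- The Laurent polynomial ring `Λ = ℂ[ℤ^m]` in `m` variables. -/
abbrev Laurent (m : ℕ) : Type := MonoidAlgebra ℂ (Zm m)

/-- A subset `U` of the character torus `Hom(ℤ^m, ℂ*) = (ℂ*)^m` is Zariski open if it is
the set of characters where at least one member of some family of Laurent polynomials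
does not vanish (i.e. its complement is a common zero locus). -/
def IsZariskiOpen (m : ℕ) (U : Set (Zm m →* ℂˣ)) : Prop :=
  ∃ S : Set (Laurent m), U = {ρ | ∃ f ∈ S, evalChar (Zm m) ρ f ≠ 0}


/-! ### Auxiliary lemmas -/

open CategoryTheory.MonoidalCategory CategoryTheory.Limits

section TorVanishing

variable {G : Type} [CommGroup G]

set_option maxHeartbeats 1000000 in
/-- If `f` annihilates `A` but acts invertibly on `ℂ_ρ`, then `Tor_j(ℂ_ρ, A) = 0`. -/
lemma tor_subsingleton (ρ : G →* ℂˣ) (A : Type) [AddCommGroup A]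
    [Module (MonoidAlgebra ℂ G) A] (j : ℕ) (f : MonoidAlgebra ℂ G) (hfA : ∀ a : A, f • a = 0)
    (hf : evalChar G ρ f ≠ 0) :
    Subsingleton (((Tor (ModuleCat (MonoidAlgebra ℂ G)) j).obj (CRho G ρ)).obj
      (ModuleCat.of (MonoidAlgebra ℂ G) A)) := by
  let Λ := MonoidAlgebra ℂ G
  let C := ModuleCat Λ
  let X : C := CRho G ρ
  let Y : C := ModuleCat.of Λ A
  let φ : X ⟶ X := f • 𝟙 X
  let g : Λ := algebraMap ℂ Λ (evalChar G ρ f)⁻¹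
  have hg : evalChar G ρ g = (evalChar G ρ f)⁻¹ := by
    exact AlgHom.commutes ((MonoidAlgebra.lift (R := ℂ) (M := G) (A := ℂ)) ((Units.coeHom ℂ).comp ρ)) _
  have hgf : ∀ x : X, (g * f) • x = x := by
    intro x
    change evalChar G ρ (g * f) * (id x : ℂ) = (id x : ℂ)
    rw [map_mul, hg, inv_mul_cancel₀ hf, one_mul]
  have hfg : ∀ x : X, (f * g) • x = x := by
    intro x; rw [mul_comm]; exact hgf x
  have hiso : IsIso φ := by
    refine ⟨g • 𝟙 X, ?_, ?_⟩
    · ext x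
      change g • (f • x) = x
      rw [← mul_smul]; exact hgf x
    · ext x
      change f • (g • x) = x
      rw [← mul_smul]; exact hfg x
  let F := (tensoringLeft C).obj X
  obtain ⟨P⟩ : Nonempty (ProjectiveResolution Y) := HasProjectiveResolution.out
  let η : F ⟶ F := (tensoringLeft C).map φ
  -- chain map lifting 0 : Y ⟶ Y
  let κ : P.complex ⟶ P.complex := f • 𝟙 P.complex
  have w : κ ≫ P.π = P.π ≫ (ChainComplex.single₀ C).map (0 : Y ⟶ Y) := by
    apply HomologicalComplex.hom_ext
    intro n
    rcases n with _ | n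
    · simp only [HomologicalComplex.comp_f, ChainComplex.single₀_map_f_zero, comp_zero]
      show (f • 𝟙 P.complex).f 0 ≫ P.π.f 0 = 0
      simp only [HomologicalComplex.smul_f_apply, HomologicalComplex.id_f,
        Linear.smul_comp, Category.id_comp]
      ext a
      exact hfA _
    · apply (HomologicalComplex.isZero_single_obj_X (ComplexShape.down ℕ) 0 Y (n+1)
        (by simp)).eq_of_tgt
  have w0 : (0 : P.complex ⟶ P.complex) ≫ P.π
      = P.π ≫ (ChainComplex.single₀ C).map (0 : Y ⟶ Y) := by
    apply HomologicalComplex.hom_ext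
    intro n
    rcases n with _ | n
    · simp only [HomologicalComplex.comp_f, ChainComplex.single₀_map_f_zero, comp_zero,
        HomologicalComplex.zero_f, zero_comp]
      exact (Limits.comp_zero).symm
    · apply (HomologicalComplex.isZero_single_obj_X (ComplexShape.down ℕ) 0 Y (n+1)
        (by simp)).eq_of_tgt
  have h1 := ProjectiveResolution.leftDerived_app_eq (F := F) (G := F) η P j
  have h2 := F.leftDerived_map_eq j (0 : Y ⟶ Y) κ w
  have h3 := F.leftDerived_map_eq j (0 : Y ⟶ Y) (0 : P.complex ⟶ P.complex) w0
  have hmid : (NatTrans.mapHomologicalComplex η (ComplexShape.down ℕ)).app P.complex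
      = (F.mapHomologicalComplex (ComplexShape.down ℕ)).map κ := by
    apply HomologicalComplex.hom_ext
    intro n
    show η.app (P.complex.X n) = F.map (κ.f n)
    show φ ▷ (P.complex.X n) = X ◁ (κ.f n)
    have hκ : κ.f n = f • 𝟙 (P.complex.X n) := rfl
    rw [hκ]
    rw [MonoidalLinear.whiskerLeft_smul]; erw [MonoidalLinear.smul_whiskerRight]; simp
  simp only [Functor.comp_map] at h2 h3
  have hzero : (NatTrans.leftDerived η j).app Y = 0 := by
    rw [h1, hmid, ← h2, h3]
    simp
    exact Limits.zero_comp
  have hId : 𝟙 (((Tor C j).obj X).obj Y) = 0 := by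
    haveI : IsIso ((Tor C j).map φ) := by
      haveI := hiso
      haveI : IsIso η := inferInstance
      refine ⟨NatTrans.leftDerived (inv η) j, ?_, ?_⟩
      · show NatTrans.leftDerived η j ≫ NatTrans.leftDerived (inv η) j = _
        rw [← NatTrans.leftDerived_comp, IsIso.hom_inv_id, NatTrans.leftDerived_id]
        rfl
      · show NatTrans.leftDerived (inv η) j ≫ NatTrans.leftDerived η j = _
        rw [← NatTrans.leftDerived_comp, IsIso.inv_hom_id, NatTrans.leftDerived_id]
        rfl
    have hu0 : ((Tor C j).map φ).app Y = 0 := hzero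
    have h4 := IsIso.hom_inv_id (((Tor C j).map φ).app Y)
    have h5 : ((Tor C j).map φ).app Y ≫ inv (((Tor C j).map φ).app Y)
        = (0 : _ ⟶ _) ≫ inv (((Tor C j).map φ).app Y) :=
      congrArg (fun t => t ≫ inv (((Tor C j).map φ).app Y)) hu0
    rw [h4, zero_comp] at h5
    exact h5
  refine ⟨fun a b => ?_⟩
  have ha := LinearMap.congr_fun (congrArg ModuleCat.Hom.hom hId) a
  have hb := LinearMap.congr_fun (congrArg ModuleCat.Hom.hom hId) b
  simp only [ModuleCat.hom_id, LinearMap.id_apply, ModuleCat.hom_zero, LinearMap.zero_apply] at ha hb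
  exact ha.trans hb.symm

/-- Every element of the group algebra is, modulo the annihilator of a finite-dimensional
module, a root of a nonzero polynomial over `ℂ`. -/
lemma exists_ann_poly (A : Type) [AddCommGroup A] [Module (MonoidAlgebra ℂ G) A]
    (hfin : Module.Finite ℂ (RestrictScalars ℂ (MonoidAlgebra ℂ G) A))
    (x : MonoidAlgebra ℂ G) :
    ∃ p : Polynomial ℂ, p ≠ 0 ∧ ∀ a : A, (Polynomial.aeval x p) • a = 0 := by
  classical
  letI : Module (MonoidAlgebra ℂ G) (RestrictScalars ℂ (MonoidAlgebra ℂ G) A) :=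
    RestrictScalars.moduleOrig ℂ (MonoidAlgebra ℂ G) A
  set M := RestrictScalars ℂ (MonoidAlgebra ℂ G) A with hM
  letI : AddCommMonoid M := AddCommGroup.toAddCommMonoid
  letI : @Module ℂ M _ AddCommGroup.toAddCommMonoid := RestrictScalars.module ℂ (MonoidAlgebra ℂ G) A
  haveI : Module.Finite ℂ M := hfin
  letI : Module (MonoidAlgebra ℂ G) M := RestrictScalars.moduleOrig ℂ (MonoidAlgebra ℂ G) A
  haveI : IsScalarTower ℂ (MonoidAlgebra ℂ G) M := RestrictScalars.isScalarTower ℂ (MonoidAlgebra ℂ G) A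
  let T : Module.End ℂ M := Algebra.lsmul ℂ ℂ M x
  have hint : IsIntegral ℂ T := Algebra.IsIntegral.isIntegral (R := ℂ) T
  obtain ⟨p, hmonic, hp⟩ := hint
  refine ⟨p, hmonic.ne_zero, fun a => ?_⟩
  have h2 : Polynomial.aeval T p = 0 := by
    rwa [Polynomial.aeval_def]
  have h3 : Polynomial.aeval T p = Algebra.lsmul ℂ ℂ M (Polynomial.aeval x p) :=
    Polynomial.aeval_algHom_apply (Algebra.lsmul ℂ ℂ M) x p
  have h4 : Algebra.lsmul ℂ ℂ M (Polynomial.aeval x p) = 0 := by rw [← h3, h2]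
  have h5 := congrFun (congrArg (DFunLike.coe) h4) (show M from a)
  exact h5

end TorVanishing

/-- The `i`-th standard generator of `ℤ^m`. -/
def zgen (m : ℕ) (i : Fin m) : Zm m := Multiplicative.ofAdd (Pi.single i 1)

lemma evalChar_of {G : Type} [Group G] (ρ : G →* ℂˣ) (g : G) :
    evalChar G ρ (MonoidAlgebra.of ℂ G g) = ρ g := by
  simp [evalChar]

lemma evalChar_algebraMap {G : Type} [Group G] (ρ : G →* ℂˣ) (c : ℂ) :
    evalChar G ρ (algebraMap ℂ (MonoidAlgebra ℂ G) c) = c := by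
  simp [evalChar]

lemma char_expand {m : ℕ} (τ : Zm m →* ℂˣ) (v : Fin m → ℤ) :
    τ (Multiplicative.ofAdd v) = ∏ i : Fin m, (τ (zgen m i)) ^ (v i) := by
  have hv : v = ∑ i : Fin m, (v i) • Pi.single i (1 : ℤ) := by
    ext k
    simp [Pi.single_apply]
  conv_lhs => rw [hv]
  rw [ofAdd_sum, map_prod]
  refine Finset.prod_congr rfl fun i _ => ?_
  rw [ofAdd_zsmul, map_zpow]
  rfl

lemma char_ext {m : ℕ} {ρ σ : Zm m →* ℂˣ} (h : ∀ i, ρ (zgen m i) = σ (zgen m i)) :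
    ρ = σ := by
  refine MonoidHom.ext fun v => Units.ext ?_
  rw [show v = Multiplicative.ofAdd (Multiplicative.toAdd v) from rfl, char_expand, char_expand]
  exact congrArg Units.val (Finset.prod_congr rfl fun i _ => by rw [h i])

/-- The set of characters vanishing on the annihilator of a finite-dimensional module
is finite. -/
lemma bad_finite (m : ℕ) (A : Type) [AddCommGroup A] [Module (Laurent m) A]
    (hfin : Module.Finite ℂ (RestrictScalars ℂ (Laurent m) A)) :
    Set.Finite {ρ : Zm m →* ℂˣ |
      ∀ f : Laurent m, (∀ a : A, f • a = 0) → evalChar (Zm m) ρ f = 0} := by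
  classical
  choose p hp0 hpann using fun i : Fin m =>
    exists_ann_poly A hfin (MonoidAlgebra.of ℂ (Zm m) (zgen m i))
  set Bad := {ρ : Zm m →* ℂˣ |
      ∀ f : Laurent m, (∀ a : A, f • a = 0) → evalChar (Zm m) ρ f = 0} with hBad
  have hroot : ∀ ρ ∈ Bad, ∀ i : Fin m, ((ρ (zgen m i) : ℂ)) ∈ (p i).rootSet ℂ := by
    intro ρ hρ i
    have h1 : evalChar (Zm m) ρ
        (Polynomial.aeval (MonoidAlgebra.of ℂ (Zm m) (zgen m i)) (p i)) = 0 :=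
      hρ _ (hpann i)
    have h2 : Polynomial.aeval
        (evalChar (Zm m) ρ (MonoidAlgebra.of ℂ (Zm m) (zgen m i))) (p i)
        = evalChar (Zm m) ρ (Polynomial.aeval (MonoidAlgebra.of ℂ (Zm m) (zgen m i)) (p i)) :=
      Polynomial.aeval_algHom_apply
        ((MonoidAlgebra.lift (R := ℂ) (M := Zm m) (A := ℂ)) ((Units.coeHom ℂ).comp ρ)) _ (p i)
    rw [Polynomial.mem_rootSet]
    refine ⟨hp0 i, ?_⟩
    rw [← evalChar_of ρ (zgen m i), h2, h1]
  apply Set.Finite.of_finite_image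
    (f := fun ρ : Zm m →* ℂˣ => fun i : Fin m => (ρ (zgen m i) : ℂ))
  · refine ((Set.Finite.pi fun i => (p i).rootSet_finite ℂ)).subset ?_
    rintro _ ⟨ρ, hρ, rfl⟩
    intro i _
    exact hroot ρ hρ i
  · intro ρ hρ σ hσ hF
    exact char_ext fun i => Units.ext (congrFun hF i)

/-- The character torus of `ℤ^m` is infinite when `m ≥ 1`. -/
lemma char_infinite (m : ℕ) (hm : 1 ≤ m) : Infinite (Zm m →* ℂˣ) := by
  have : Infinite ℂˣ := Infinite.of_injective (fun n : ℕ => Units.mk0 (n + 1 : ℂ)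
      (by
        have : ((n + 1 : ℕ) : ℂ) ≠ 0 := Nat.cast_ne_zero.mpr (Nat.succ_ne_zero n)
        push_cast at this
        exact this)) (by
    intro a b hab
    have := congrArg Units.val hab
    simpa using this)
  let i0 : Fin m := ⟨0, hm⟩
  refine Infinite.of_injective (fun t : ℂˣ =>
    (zpowersHom ℂˣ t).comp
      (AddMonoidHom.toMultiplicative (Pi.evalAddMonoidHom (fun _ : Fin m => ℤ) i0))) ?_
  intro s t hst
  have := congrArg (fun τ : Zm m →* ℂˣ => τ (zgen m i0)) hst
  simpa [zgen, Pi.single_apply] using this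

/-- Let `Λ = ℂ[ℤ^m]` with `m ≥ 1`, and `A` a `Λ`-module which is finite
dimensional over `ℂ`.  For each `j ≥ 0`, the set
`A_j = { ρ ∈ Hom(ℤ^m, ℂ*) : Tor_j^Λ(ℂ_ρ, A) = 0 }` is a nonempty Zariski open subset of
the character torus. -/
theorem tor_vanishing_zariski_open_nonempty (m : ℕ) (hm : 1 ≤ m)
    (A : Type) [AddCommGroup A] [Module (Laurent m) A]
    (hfin : Module.Finite ℂ (RestrictScalars ℂ (Laurent m) A)) (j : ℕ) :
    IsZariskiOpen m
        {ρ : Zm m →* ℂˣ |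
          Subsingleton (((Tor (ModuleCat (Laurent m)) j).obj (CRho (Zm m) ρ)).obj
            (ModuleCat.of (Laurent m) A))} ∧
      {ρ : Zm m →* ℂˣ |
          Subsingleton (((Tor (ModuleCat (Laurent m)) j).obj (CRho (Zm m) ρ)).obj
            (ModuleCat.of (Laurent m) A))}.Nonempty := by
  classical
  set Good := {ρ : Zm m →* ℂˣ |
      Subsingleton (((Tor (ModuleCat (Laurent m)) j).obj (CRho (Zm m) ρ)).obj
        (ModuleCat.of (Laurent m) A))} with hGoodDef
  have key : ∀ ρ : Zm m →* ℂˣ, ρ ∉ Good →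
      ∀ f : Laurent m, (∀ a : A, f • a = 0) → evalChar (Zm m) ρ f = 0 := by
    intro ρ hρ f hfA
    by_contra h0
    exact hρ (tor_subsingleton ρ A j f hfA h0)
  have hfinbad : Set.Finite Goodᶜ :=
    (bad_finite m A hfin).subset (fun ρ hρ => key ρ hρ)
  constructor
  · refine ⟨{f : Laurent m | ∀ σ ∈ Goodᶜ, evalChar (Zm m) σ f = 0}, Set.ext fun ρ => ?_⟩
    constructor
    · intro hρ
      have hchoice : ∀ σ : Zm m →* ℂˣ, σ ∈ Goodᶜ → ∃ h : Laurent m,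
          evalChar (Zm m) σ h = 0 ∧ evalChar (Zm m) ρ h ≠ 0 := by
        intro σ hσ
        have hne : σ ≠ ρ := fun h => hσ (h ▸ hρ)
        obtain ⟨g, hg⟩ : ∃ g : Zm m, (σ g : ℂ) ≠ (ρ g : ℂ) := by
          by_contra hc
          push_neg at hc
          exact hne (MonoidHom.ext fun g => Units.ext (hc g))
        refine ⟨MonoidAlgebra.of ℂ (Zm m) g - algebraMap ℂ (Laurent m) ((σ g : ℂ)), ?_, ?_⟩
        · rw [map_sub, evalChar_of, evalChar_algebraMap, sub_self]
        · rw [map_sub, evalChar_of, evalChar_algebraMap]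
          exact sub_ne_zero.mpr fun hh => hg hh.symm
      choose hfun h1 h2 using hchoice
      refine ⟨∏ σ ∈ hfinbad.toFinset.attach,
        hfun σ.1 (hfinbad.mem_toFinset.mp σ.2), ?_, ?_⟩
      · intro σ' hσ'
        rw [map_prod]
        exact Finset.prod_eq_zero
          (Finset.mem_attach _ ⟨σ', hfinbad.mem_toFinset.mpr hσ'⟩) (h1 _ _)
      · rw [map_prod]
        exact Finset.prod_ne_zero_iff.mpr fun σ _ => h2 _ _
    · rintro ⟨f, hfS, hfρ⟩
      by_contra hρ
      exact hfρ (hfS ρ hρ)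
  · haveI := char_infinite m hm
    obtain ⟨ρ, hρ⟩ := (hfinbad.infinite_compl).nonempty
    exact ⟨ρ, by simpa using hρ⟩
end

section
/- With h : X = C_1 × ⋯ × C_r → E as above (r ≥ 2), defined by h(x) = Σ f_j(x_j) where each f_j : C_j → E is a branched double cover classified by a character φ_j killing no boundary loop (φ_j(α_b) = 1 for all branch points b), the smooth fibers of h are connected; hence h is an irrational (elliptic) pencil. -/
open scoped Manifold

/-- Any space charted on `ℂ` is T1: distinct points can be separated inside a chart
(charts are partial homeomorphisms onto subsets of the Hausdorff space `ℂ`). -/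
private theorem aux_t1 (E : Type) [TopologicalSpace E] [ChartedSpace ℂ E] : T1Space E := by
  constructor
  intro a
  rw [← isOpen_compl_iff, isOpen_iff_forall_mem_open]
  intro y hy
  by_cases ha : a ∈ (chartAt ℂ y).source
  · refine ⟨(chartAt ℂ y).source ∩ (chartAt ℂ y) ⁻¹' {(chartAt ℂ y) a}ᶜ, ?_, ?_, ?_⟩
    · rintro z ⟨hzs, hz⟩
      intro hza
      apply hz
      rw [Set.mem_singleton_iff, hza]
    · exact (chartAt ℂ y).continuousOn.isOpen_inter_preimage (chartAt ℂ y).open_source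
        isOpen_compl_singleton
    · refine ⟨mem_chart_source ℂ y, ?_⟩
      intro h
      rw [Set.mem_singleton_iff] at h
      exact hy ((chartAt ℂ y).injOn (mem_chart_source ℂ y) ha h)
  · exact ⟨(chartAt ℂ y).source, fun z hz hza => ha (hza ▸ hz), (chartAt ℂ y).open_source,
      mem_chart_source ℂ y⟩

/-- In a compact T1 space with a (jointly) continuous commutative group addition,
negation is automatically continuous: its graph is closed and the projection along a
compact factor is a closed map (Kuratowski), so preimages of closed sets are closed. -/
private theorem aux_neg (E : Type) [AddCommGroup E] [TopologicalSpace E] [CompactSpace E]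
    [T1Space E] (hadd : Continuous fun q : E × E => q.1 + q.2) :
    Continuous fun z : E => -z := by
  rw [continuous_iff_isClosed]
  intro F hF
  have key : (fun z : E => -z) ⁻¹' F
      = Prod.fst '' ({q : E × E | q.1 + q.2 = 0} ∩ Set.univ ×ˢ F) := by
    ext z
    constructor
    · intro hz
      exact ⟨(z, -z), ⟨by simp, Set.mem_univ _, by simpa using hz⟩, rfl⟩
    · rintro ⟨⟨z', u⟩, ⟨h1, -, h2⟩, rfl⟩
      have hu : -z' = u := neg_eq_of_add_eq_zero_right h1
      show -z' ∈ F
      rw [hu]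
      exact h2
  rw [key]
  have hcl : IsClosed ({q : E × E | q.1 + q.2 = 0} ∩ Set.univ ×ˢ F) :=
    ((isClosed_singleton (x := (0 : E))).preimage hadd).inter (isClosed_univ.prod hF)
  exact isClosedMap_fst_of_compactSpace _ hcl

/-- Splitting off the `0`-th coordinate of a finite product of spaces, as a homeomorphism. -/
private def auxHomeo {n : ℕ} (C : Fin (n + 1) → Type) [∀ j, TopologicalSpace (C j)] :
    (∀ j, C j) ≃ₜ C 0 × ∀ j : Fin n, C j.succ where
  toFun p := (p 0, fun j => p j.succ)
  invFun q := Fin.cons q.1 q.2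
  left_inv p := Fin.cons_self_tail p
  right_inv q := by
    refine Prod.ext ?_ ?_
    · show Fin.cons q.1 q.2 0 = q.1
      exact Fin.cons_zero _ _
    · funext j
      show Fin.cons q.1 q.2 j.succ = q.2 j
      exact Fin.cons_succ _ _ _
  continuous_toFun := (continuous_apply 0).prodMk (continuous_pi fun j => continuous_apply _)
  continuous_invFun := continuous_pi fun j => by
    induction j using Fin.cases with
    | zero => simpa using continuous_fst
    | succ i =>
      simp only [Fin.cons_succ]
      exact (continuous_apply i).comp continuous_snd

/-- Kuratowski: forgetting a compact coordinate is a closed map. -/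
private theorem aux_closedMap {n : ℕ} (C : Fin (n + 1) → Type) [∀ j, TopologicalSpace (C j)]
    [CompactSpace (C 0)] :
    IsClosedMap fun (p : ∀ j, C j) (j : Fin n) => p j.succ := by
  have h : (fun (p : ∀ j, C j) (j : Fin n) => p j.succ)
      = Prod.snd ∘ (auxHomeo C) := rfl
  rw [h]
  exact isClosedMap_snd_of_compactSpace.comp (auxHomeo C).isClosedMap

/-- With `h : X = C_1 × ⋯ × C_r → E` (`r ≥ 2`) defined by
`h(x) = Σ f_j(x_j)`, where each `f_j : C_j → E` is a branched double cover of the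
elliptic curve `E`, branched over the finite set `B_j`, which is branched at *every*
point of `B_j` (each `b ∈ B_j` has exactly one preimage — this encodes that the
classifying character `φ_j` satisfies `φ_j(α_b) = 1` for every branch point `b`), the
smooth fibers of `h` are connected; hence `h` is an irrational (elliptic) pencil. -/
theorem sum_of_double_covers_connected_fibers (r : ℕ) (hr : 2 ≤ r)
    -- `E` is an elliptic curve: a compact connected complex curve, covered by `ℂ`,
    -- with a holomorphic group law
    (E : Type) [AddCommGroup E] [TopologicalSpace E] [ChartedSpace ℂ E]
    [IsManifold 𝓘(ℂ, ℂ) (⊤ : ℕ∞) E] [CompactSpace E] [ConnectedSpace E]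
    (hell : ∃ p : ℂ → E, IsCoveringMap p)
    (hadd : MDifferentiable (𝓘(ℂ, ℂ).prod 𝓘(ℂ, ℂ)) 𝓘(ℂ, ℂ)
      (fun q : E × E => q.1 + q.2))
    -- the `C j` are compact connected complex curves, and `f j : C j → E` is holomorphic
    (C : Fin r → Type) [∀ j, TopologicalSpace (C j)] [∀ j, ChartedSpace ℂ (C j)]
    [∀ j, IsManifold 𝓘(ℂ, ℂ) (⊤ : ℕ∞) (C j)]
    [∀ j, CompactSpace (C j)] [∀ j, ConnectedSpace (C j)]
    (f : ∀ j, C j → E) (hf : ∀ j, MDifferentiable 𝓘(ℂ, ℂ) 𝓘(ℂ, ℂ) (f j))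
    -- `B j ⊆ E` is the finite branch locus of the double cover `f j`
    (B : Fin r → Set E) (hB : ∀ j, (B j).Finite ∧ (B j).Nonempty)
    (hsurj : ∀ j, Function.Surjective (f j))
    -- away from the branch locus, `f j` is a two sheeted covering
    (hcov : ∀ j, IsCoveringMapOn (f j) (B j)ᶜ)
    (hdeg : ∀ j, ∀ t : E, t ∉ B j → Set.ncard (f j ⁻¹' {t}) = 2)
    -- `f j` is branched at every point of `B j`: each branch point has a unique preimage
    (hbranch : ∀ j, ∀ b ∈ B j, ∃! c : C j, f j c = b) :
    -- every smooth fiber of `h = Σ f_j` (fiber over a regular value) is connected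
    ∀ t : E, (∀ p : ∀ j, C j, (∑ j, f j (p j)) = t → ∃ j, f j (p j) ∉ B j) →
      IsConnected {p : ∀ j, C j | (∑ j, f j (p j)) = t} := by
  obtain ⟨k, rfl⟩ := Nat.exists_eq_add_of_le' hr
  intro t _ht
  haveI : T1Space E := aux_t1 E
  haveI : ∀ i, Nonempty (C i) := fun i => ConnectedSpace.toNonempty
  have haddc : Continuous fun q : E × E => q.1 + q.2 := hadd.continuous
  haveI : ContinuousAdd E := ⟨haddc⟩
  have hneg : Continuous fun z : E => -z := aux_neg E haddc
  have hfc : ∀ j, Continuous (f j) := fun j => (hf j).continuous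
  set Y := ∀ j : Fin (k + 1), C j.succ with hYdef
  set w : Y → E := fun y => ∑ j, f j.succ (y j) with hwdef
  set ee : Y → E := fun y => t - w y with heedef
  set π : (∀ j, C j) → Y := fun p j => p j.succ with hπdef
  set X : Set (∀ j, C j) := {p | ∑ j, f j (p j) = t} with hXdef
  have hw : Continuous w := continuous_finset_sum _ fun j _ => (hfc _).comp (continuous_apply _)
  have hee : Continuous ee := by
    have : ee = fun y => t + -(w y) := by
      funext y; rw [heedef]; exact sub_eq_add_neg _ _
    rw [this]
    exact continuous_const.add (hneg.comp hw)
  have hsum : ∀ p : ∀ j, C j, (∑ j, f j (p j)) = f 0 (p 0) + w (π p) := fun p =>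
    Fin.sum_univ_succ _
  have hmem : ∀ p : ∀ j, C j, p ∈ X ↔ f 0 (p 0) = ee (π p) := by
    intro p
    rw [hXdef, Set.mem_setOf_eq, hsum p, heedef]
    exact (eq_sub_iff_add_eq).symm
  have hπcons : ∀ (c : C 0) (y : Y), π (Fin.cons c y) = y := by
    intro c y; funext j; exact Fin.cons_succ c y j
  have hconsX : ∀ (c : C 0) (y : Y), f 0 c = ee y → Fin.cons c y ∈ X := by
    intro c y hc
    rw [hmem, hπcons, Fin.cons_zero]
    exact hc
  have hπsurj : ∀ y : Y, ∃ p ∈ X, π p = y := by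
    intro y
    obtain ⟨c, hc⟩ := hsurj 0 (ee y)
    exact ⟨Fin.cons c y, hconsX c y hc, hπcons c y⟩
  have huniq : ∀ p q, p ∈ X → q ∈ X → π p = π q → ee (π p) ∈ B 0 → p = q := by
    intro p q hp hq hpq hb
    obtain ⟨c, -, hcu⟩ := hbranch 0 _ hb
    have e1 : p 0 = c := hcu (p 0) ((hmem p).1 hp)
    have e2 : q 0 = c := hcu (q 0) (by
      show f 0 (q 0) = ee (π p)
      rw [(hmem q).1 hq, hpq])
    have h0 : p 0 = q 0 := by rw [e1, e2]
    funext j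
    exact Fin.cases h0 (fun i => congrFun hpq i) j
  have hSne : ∃ y : Y, ee y ∈ B 0 := by
    obtain ⟨b, hb⟩ := (hB 0).2
    set z : ∀ j : Fin k, C j.succ.succ := fun j => Classical.arbitrary _ with hz
    obtain ⟨c, hc⟩ := hsurj (Fin.succ 0) (t - b - ∑ j : Fin k, f j.succ.succ (z j))
    refine ⟨Fin.cons (α := fun j : Fin (k + 1) => C j.succ) c z, ?_⟩
    have hwz : w (Fin.cons (α := fun j : Fin (k + 1) => C j.succ) c z) = t - b := by
      show (∑ j : Fin (k + 1),
        f j.succ (Fin.cons (α := fun j : Fin (k + 1) => C j.succ) c z j)) = t - b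
      rw [Fin.sum_univ_succ]
      simp only [Fin.cons_zero, Fin.cons_succ]
      rw [hc]
      exact sub_add_cancel _ _
    show t - w (Fin.cons (α := fun j : Fin (k + 1) => C j.succ) c z) ∈ B 0
    rw [hwz, sub_sub_cancel]
    exact hb
  have hXcl : IsClosed X := by
    have h : X = (fun p : ∀ j, C j => ∑ j, f j (p j)) ⁻¹' {t} := rfl
    rw [h]
    exact (isClosed_singleton).preimage
      (continuous_finset_sum _ fun j _ => (hfc _).comp (continuous_apply _))
  have hclosedmap : IsClosedMap π := aux_closedMap C
  constructor
  · obtain ⟨p, hp, -⟩ := hπsurj (fun j => Classical.arbitrary _)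
    exact ⟨p, hp⟩
  · intro u v hu hv hcover hne1 hne2
    obtain ⟨p₀, hp₀X, hp₀u⟩ := hne1
    obtain ⟨q₀, hq₀X, hq₀v⟩ := hne2
    by_contra hne
    rw [Set.not_nonempty_iff_eq_empty] at hne
    set U : Set (∀ j, C j) := X ∩ u with hUdef
    set V : Set (∀ j, C j) := X ∩ v with hVdef
    have hUcl : IsClosed U := by
      have h : U = X ∩ vᶜ := by
        apply Set.Subset.antisymm
        · rintro p ⟨hpX, hpu⟩
          refine ⟨hpX, fun hpv => ?_⟩
          have : p ∈ X ∩ (u ∩ v) := ⟨hpX, hpu, hpv⟩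
          rw [hne] at this
          exact this
        · rintro p ⟨hpX, hpv⟩
          rcases hcover hpX with h | h
          · exact ⟨hpX, h⟩
          · exact absurd h hpv
      rw [h]
      exact hXcl.inter hv.isClosed_compl
    have hVcl : IsClosed V := by
      have h : V = X ∩ uᶜ := by
        apply Set.Subset.antisymm
        · rintro p ⟨hpX, hpv⟩
          refine ⟨hpX, fun hpu => ?_⟩
          have : p ∈ X ∩ (u ∩ v) := ⟨hpX, hpu, hpv⟩
          rw [hne] at this
          exact this
        · rintro p ⟨hpX, hpu⟩
          rcases hcover hpX with h | h
          · exact absurd h hpu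
          · exact ⟨hpX, h⟩
      rw [h]
      exact hXcl.inter hu.isClosed_compl
    have hUV : U ∩ V = ∅ := by
      apply Set.eq_empty_iff_forall_notMem.2
      rintro p ⟨⟨hpX, hpu⟩, ⟨-, hpv⟩⟩
      have : p ∈ X ∩ (u ∩ v) := ⟨hpX, hpu, hpv⟩
      rw [hne] at this
      exact this
    have hUVcover : ∀ p ∈ X, p ∈ U ∨ p ∈ V := by
      intro p hp
      rcases hcover hp with h | h
      · exact Or.inl ⟨hp, h⟩
      · exact Or.inr ⟨hp, h⟩
    -- the key openness claim
    have main : ∀ (o W W' : Set (∀ j, C j)), IsOpen o → W = X ∩ o → IsClosed W' → W' ⊆ X →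
        W ∩ W' = ∅ → (∀ p ∈ X, p ∈ W ∨ p ∈ W') → IsOpen (π '' W) := by
      intro o W W' ho hWeq hW'cl hW'X hdisj hcov2
      rw [isOpen_iff_forall_mem_open]
      rintro y ⟨x, hxW, rfl⟩
      have hxX : x ∈ X := (hWeq ▸ hxW).1
      by_cases hyB : ee (π x) ∈ B 0
      · refine ⟨(π '' W')ᶜ, ?_, (hclosedmap W' hW'cl).isOpen_compl, ?_⟩
        · intro y' hy'
          obtain ⟨p, hpX, hπp⟩ := hπsurj y'
          rcases hcov2 p hpX with h | h
          · exact ⟨p, h, hπp⟩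
          · exact absurd (⟨p, h, hπp⟩ : y' ∈ π '' W') hy'
        · rintro ⟨q, hqW', hπq⟩
          have hq : q = x := huniq q x (hW'X hqW') hxX hπq (by rw [hπq]; exact hyB)
          have : x ∈ W ∩ W' := ⟨hxW, hq ▸ hqW'⟩
          rw [hdisj] at this
          exact this
      · have hx0 : f 0 (x 0) = ee (π x) := (hmem x).1 hxX
        have hEC := hcov 0 (ee (π x)) hyB
        haveI : Nonempty (f 0 ⁻¹' {ee (π x)}) := ⟨⟨x 0, hx0⟩⟩
        obtain ⟨T, hT⟩ : ∃ T : Bundle.Trivialization (f 0 ⁻¹' {ee (π x)}) (f 0), ee (π x) ∈ T.baseSet :=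
          ⟨_, hEC.mem_toTrivialization_baseSet⟩
        have hxsrc : x 0 ∈ T.source := T.mem_source.2 (by rw [hx0]; exact hT)
        set σ : E → C 0 := fun z => T.toOpenPartialHomeomorph.symm (z, (T (x 0)).2) with hσdef
        have hσcont : ContinuousOn σ T.baseSet := by
          have h1 : ContinuousOn (fun z : E => (z, (T (x 0)).2)) T.baseSet :=
            (continuous_id.prodMk continuous_const).continuousOn
          have h2 : Set.MapsTo (fun z : E => (z, (T (x 0)).2)) T.baseSet T.target :=
            fun z hz => T.mem_target.2 hz
          exact T.toOpenPartialHomeomorph.continuousOn_symm.comp h1 h2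
        have hσf : ∀ z ∈ T.baseSet, f 0 (σ z) = z := fun z hz =>
          T.proj_symm_apply (T.mem_target.2 hz)
        have hσx : σ (ee (π x)) = x 0 := by
          have hpair : ((f 0 (x 0) : E), (T (x 0)).2) = (ee (π x), (T (x 0)).2) := by
            rw [hx0]
          show T.toOpenPartialHomeomorph.symm (ee (π x), (T (x 0)).2) = x 0
          rw [← hpair]
          exact T.symm_apply_mk_proj hxsrc
        set m : Y → ∀ j, C j := fun y' => Fin.cons (σ (ee y')) y' with hmdef
        have hmcont : ContinuousOn m (ee ⁻¹' T.baseSet) := by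
          rw [continuousOn_pi]
          intro j
          induction j using Fin.cases with
          | zero =>
            have : (fun y' => m y' 0) = fun y' => σ (ee y') := by
              funext y'; rw [hmdef]; exact Fin.cons_zero _ _
            rw [this]
            exact hσcont.comp hee.continuousOn (fun y' hy' => hy')
          | succ i =>
            have : (fun y' => m y' i.succ) = fun y' => y' i := by
              funext y'; rw [hmdef]; exact Fin.cons_succ _ _ _
            rw [this]
            exact (continuous_apply i).continuousOn
        have hmX : ∀ y' ∈ ee ⁻¹' T.baseSet, m y' ∈ X := fun y' hy' => hconsX _ _ (hσf _ hy')
        have hmx : m (π x) = x := by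
          rw [hmdef]
          show Fin.cons (σ (ee (π x))) (π x) = x
          rw [hσx]
          exact Fin.cons_self_tail x
        refine ⟨(ee ⁻¹' T.baseSet) ∩ m ⁻¹' o, ?_, ?_, ?_, ?_⟩
        · rintro y' ⟨hy'1, hy'2⟩
          exact ⟨m y', hWeq ▸ ⟨hmX y' hy'1, hy'2⟩, hπcons _ _⟩
        · exact hmcont.isOpen_inter_preimage (T.open_baseSet.preimage hee) ho
        · exact hT
        · rw [Set.mem_preimage, hmx]
          exact (hWeq ▸ hxW).2
    have hπUopen : IsOpen (π '' U) := main u U V hu rfl hVcl (fun p hp => hp.1) hUV hUVcover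
    have hπVopen : IsOpen (π '' V) := main v V U hv rfl hUcl (fun p hp => hp.1)
      (by rw [Set.inter_comm]; exact hUV) (fun p hp => (hUVcover p hp).symm)
    have hπUuniv : π '' U = Set.univ := by
      rcases isClopen_iff.1 ⟨hclosedmap U hUcl, hπUopen⟩ with h | h
      · exfalso
        have : π p₀ ∈ π '' U := ⟨p₀, ⟨hp₀X, hp₀u⟩, rfl⟩
        rw [h] at this
        exact this
      · exact h
    have hπVuniv : π '' V = Set.univ := by
      rcases isClopen_iff.1 ⟨hclosedmap V hVcl, hπVopen⟩ with h | h
      · exfalso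
        have : π q₀ ∈ π '' V := ⟨q₀, ⟨hq₀X, hq₀v⟩, rfl⟩
        rw [h] at this
        exact this
      · exact h
    obtain ⟨y, hy⟩ := hSne
    have h1 : y ∈ π '' U := hπUuniv ▸ Set.mem_univ y
    have h2 : y ∈ π '' V := hπVuniv ▸ Set.mem_univ y
    obtain ⟨p, hpU, hπp⟩ := h1
    obtain ⟨q, hqV, hπq⟩ := h2
    have hpq : p = q := huniq p q hpU.1 hqV.1 (by rw [hπp, hπq]) (by rw [hπp]; exact hy)
    have : p ∈ U ∩ V := ⟨hpU, hpq ▸ hqV⟩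
    rw [hUV] at this
    exact this
end
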